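/- Every pair of reduced fractions (a/b, c/d) with |ad−bc| = 2 is inner regular: gcd(ab+cd, b²+d², a²+c²) = 2. -/

import Mathlib

/-- Every pair of reduced fractions with |ad−bc| = 2 is inner regular:
gcd(ab+cd, b²+d², a²+c²) = 2. -/
theorem stmt_3 (a b c d : ℤ) (hb : 0 < b) (hd : 0 < d)
    (hab : Int.gcd a b = 1) (hcd : Int.gcd c d = 1)
    (hF : (a*d - b*c).natAbs = 2) :
    Int.gcd (a*b + c*d) (Int.gcd (b^2 + d^2) (a^2 + c^2)) = 2 := by
  set g := Int.gcd (a*b + c*d) (Int.gcd (b^2 + d^2) (a^2 + c^2)) with hg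
  have hdet : a*d - b*c = 2 ∨ a*d - b*c = -2 := by omega
  have hsq : (a*d - b*c)^2 = 4 := by rcases hdet with h | h <;> rw [h] <;> ring
  -- g divides 2
  have g1 : (g:ℤ) ∣ a*b + c*d := Int.gcd_dvd_left _ _
  have g23 : (g:ℤ) ∣ (Int.gcd (b^2 + d^2) (a^2 + c^2) : ℤ) := Int.gcd_dvd_right _ _
  have g2 : (g:ℤ) ∣ b^2 + d^2 := g23.trans (Int.gcd_dvd_left _ _)
  have g3 : (g:ℤ) ∣ a^2 + c^2 := g23.trans (Int.gcd_dvd_right _ _)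
  have gsq : ((g:ℤ))^2 ∣ 4 := by
    have h1 : ((g:ℤ))^2 ∣ (a^2 + c^2) * (b^2 + d^2) := by rw [sq]; exact mul_dvd_mul g3 g2
    have h2 : ((g:ℤ))^2 ∣ (a*b + c*d)^2 := pow_dvd_pow_of_dvd g1 2
    have hid : (4:ℤ) = (a^2 + c^2) * (b^2 + d^2) - (a*b + c*d)^2 := by
      rw [← hsq]; ring
    rw [hid]; exact dvd_sub h1 h2
  have gdvd2 : g ∣ 2 := by
    have : g^2 ∣ 2^2 := by
      have := Int.ofNat_dvd.mp (by push_cast; exact_mod_cast gsq : ((g^2 : ℕ) : ℤ) ∣ ((4:ℕ):ℤ))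
      simpa using this
    exact (Nat.pow_dvd_pow_iff two_ne_zero).mp this
  -- 2 divides g
  have hab2 : ¬((2:ℤ) ∣ a ∧ (2:ℤ) ∣ b) := by
    rintro ⟨ha, hb'⟩
    have : (2:ℤ) ∣ (Int.gcd a b : ℤ) := Int.dvd_coe_gcd ha hb'
    rw [hab] at this; norm_num at this
  have hcd2 : ¬((2:ℤ) ∣ c ∧ (2:ℤ) ∣ d) := by
    rintro ⟨hc, hd'⟩
    have : (2:ℤ) ∣ (Int.gcd c d : ℤ) := Int.dvd_coe_gcd hc hd'
    rw [hcd] at this; norm_num at this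
  have key : ∀ x : ℤ, ((x : ZMod 2) = 0) ↔ (2:ℤ) ∣ x := fun x =>
    ZMod.intCast_zmod_eq_zero_iff_dvd x 2
  have hdet2 : ((a:ZMod 2)*d - b*c) = 0 := by
    have : (2:ℤ) ∣ a*d - b*c := by omega
    have := (key _).mpr this
    push_cast at this
    exact this
  have hzab : ¬((a:ZMod 2) = 0 ∧ (b:ZMod 2) = 0) := by
    rw [key, key]; exact hab2
  have hzcd : ¬((c:ZMod 2) = 0 ∧ (d:ZMod 2) = 0) := by
    rw [key, key]; exact hcd2
  have main : ∀ A B C D : ZMod 2, A*D - B*C = 0 → ¬(A = 0 ∧ B = 0) →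
      ¬(C = 0 ∧ D = 0) → A*B + C*D = 0 ∧ B^2 + D^2 = 0 ∧ A^2 + C^2 = 0 := by
    decide
  obtain ⟨m1, m2, m3⟩ := main (a:ZMod 2) (b:ZMod 2) (c:ZMod 2) (d:ZMod 2) hdet2 hzab hzcd
  have d1 : (2:ℤ) ∣ a*b + c*d := (key _).mp (by push_cast; exact m1)
  have d2 : (2:ℤ) ∣ b^2 + d^2 := (key _).mp (by push_cast; exact m2)
  have d3 : (2:ℤ) ∣ a^2 + c^2 := (key _).mp (by push_cast; exact m3)
  have h2g : (2:ℤ) ∣ (g:ℤ) := Int.dvd_coe_gcd d1 (Int.dvd_coe_gcd d2 d3)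
  have h2g' : 2 ∣ g := by exact_mod_cast h2g
  exact Nat.dvd_antisymm gdvd2 h2g'
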